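/- arXiv:2403.00971 — 5 statements merged into one kernel-verified Lean document; each statement's English description precedes it below -/
import Mathlib

section
/- For every b ∈ ℝ, every V_R < V_F and every N ≥ 0, the double integral I(N) admits the one-dimensional representation I(N) = ∫_0^∞ s^{-1} e^{-s²/2} e^{-sbN} (e^{s V_F} − e^{s V_R}) ds. -/
open MeasureTheory Real Filter

/-- The function `I(N)` from the NNLIF model: a double integral depending on the
connectivity parameter `b`, the reset potential `V_R` and the firing potential `V_F`. -/
noncomputable def Ifun (b V_R V_F N : ℝ) : ℝ :=
  ∫ v in Set.Iic V_F,
    Real.exp (-(v - b * N) ^ 2 / 2) * ∫ w in (max v V_R)..V_F, Real.exp ((w - b * N) ^ 2 / 2)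

open Set in
lemma NNLIF_gauss_int (m : ℝ) : Integrable (fun v : ℝ => Real.exp (-(v - m) ^ 2 / 2)) := by
  have h := (integrable_exp_neg_mul_sq (by norm_num : (0:ℝ) < 1/2)).comp_sub_right m
  convert h using 2 with v
  ring_nf

open Set in
lemma NNLIF_quad_int (c : ℝ) : Integrable (fun s : ℝ => Real.exp (-s ^ 2 / 2 + c * s)) := by
  have h := (NNLIF_gauss_int c).const_mul (Real.exp (c ^ 2 / 2))
  convert h using 2 with s
  rw [← Real.exp_add]
  ring_nf

open Set in
lemma NNLIF_setIntegral_Iic_comp_add_right (f : ℝ → ℝ) (a c : ℝ) :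
    ∫ x in Iic c, f (x + a) = ∫ x in Iic (c + a), f x := by
  have A : MeasurableEmbedding fun x : ℝ => x + a :=
    (Homeomorph.addRight a).isClosedEmbedding.measurableEmbedding
  have h := A.setIntegral_map (μ := volume) f (Iic (c + a))
  rw [map_add_right_eq_self] at h
  rw [h]
  congr 1
  ext x
  simp

open Set in
lemma NNLIF_key_sub (m w : ℝ) :
    ∫ s in Ioi (0:ℝ), Real.exp (-s ^ 2 / 2 + (w - m) * s)
      = Real.exp ((w - m) ^ 2 / 2) * ∫ v in Iic w, Real.exp (-(v - m) ^ 2 / 2) := by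
  have h1 : ∀ s : ℝ, Real.exp (-s ^ 2 / 2 + (w - m) * s)
      = Real.exp ((w - m) ^ 2 / 2) * Real.exp (-((-s) + w - m) ^ 2 / 2) := by
    intro s
    rw [← Real.exp_add]
    ring_nf
  simp_rw [h1]
  rw [integral_const_mul]
  congr 1
  have h2 := integral_comp_neg_Ioi (0:ℝ) (fun t => Real.exp (-(t + w - m) ^ 2 / 2))
  simp only [neg_zero] at h2
  rw [h2]
  exact NNLIF_setIntegral_Iic_comp_add_right (fun x => Real.exp (-(x - m) ^ 2 / 2)) w 0 |>.trans
    (by rw [zero_add])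

open Set in
lemma NNLIF_lhs (m V_R V_F : ℝ) (hV : V_R < V_F) :
    (∫ v in Iic V_F, Real.exp (-(v - m) ^ 2 / 2) *
        ∫ w in (max v V_R)..V_F, Real.exp ((w - m) ^ 2 / 2))
    = ∫ w in V_R..V_F,
        Real.exp ((w - m) ^ 2 / 2) * ∫ v in Iic w, Real.exp (-(v - m) ^ 2 / 2) := by
  set f : ℝ → ℝ := fun v => Real.exp (-(v - m) ^ 2 / 2) with hfdef
  set g : ℝ → ℝ := fun w => Real.exp ((w - m) ^ 2 / 2) with hgdef
  have hfc : Continuous f := by fun_prop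
  have hgc : Continuous g := by fun_prop
  have hfi : Integrable f := by
    rw [hfdef]; exact NNLIF_gauss_int m
  set F : ℝ → ℝ := fun x => ∫ v in V_R..x, f v with hFdef
  set G : ℝ → ℝ := fun x => ∫ w in V_R..x, g w with hGdef
  have hFd : ∀ x : ℝ, HasDerivAt F (f x) x := fun x =>
    (hfc.integral_hasStrictDerivAt V_R x).hasDerivAt
  have hGd : ∀ x : ℝ, HasDerivAt G (g x) x := fun x =>
    (hgc.integral_hasStrictDerivAt V_R x).hasDerivAt
  have hFc : Continuous F := continuous_iff_continuousAt.mpr fun x => (hFd x).continuousAt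
  have hGc : Continuous G := continuous_iff_continuousAt.mpr fun x => (hGd x).continuousAt
  have hsplit : ∀ x : ℝ, ∫ w in x..V_F, g w = G V_F - G x := by
    intro x
    have h := intervalIntegral.integral_add_adjacent_intervals
      (hgc.intervalIntegrable V_R x : IntervalIntegrable g volume V_R x)
      (hgc.intervalIntegrable x V_F : IntervalIntegrable g volume x V_F)
    rw [hGdef]; simp only; linarith
  -- split the domain
  have hint1 : IntegrableOn (fun v => f v * ∫ w in (max v V_R)..V_F, g w) (Iic V_R) := by
    apply ((hfi.mul_const (G V_F - G V_R)).integrableOn).congr_fun ?_ measurableSet_Iic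
    intro v hv
    simp only
    rw [max_eq_right (mem_Iic.mp hv), hsplit V_R]
  have hint2 : IntegrableOn (fun v => f v * ∫ w in (max v V_R)..V_F, g w) (Ioc V_R V_F) := by
    have hc : Continuous fun v => f v * (G V_F - G (max v V_R)) := by
      exact hfc.mul (continuous_const.sub (hGc.comp (continuous_id.max continuous_const)))
    apply (hc.integrableOn_Ioc).congr_fun ?_ measurableSet_Ioc
    intro v _
    simp only [hsplit (max v V_R)]
  have hdom : Iic V_F = Iic V_R ∪ Ioc V_R V_F := (Iic_union_Ioc_eq_Iic hV.le).symm
  rw [hdom, setIntegral_union (Iic_disjoint_Ioc le_rfl) measurableSet_Ioc hint1 hint2]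
  set A : ℝ := ∫ v in Iic V_R, f v with hAdef
  have part1 : (∫ v in Iic V_R, f v * ∫ w in (max v V_R)..V_F, g w) = A * G V_F := by
    rw [hAdef, ← integral_mul_const]
    apply setIntegral_congr_fun measurableSet_Iic
    intro v hv
    simp only
    rw [max_eq_right (mem_Iic.mp hv), hsplit V_R]
    have hGR : G V_R = 0 := by rw [hGdef]; simp
    rw [hGR, sub_zero]
  have part2 : (∫ v in Ioc V_R V_F, f v * ∫ w in (max v V_R)..V_F, g w)
      = ∫ v in V_R..V_F, f v * (G V_F - G v) := by
    rw [intervalIntegral.integral_of_le hV.le]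
    apply setIntegral_congr_fun measurableSet_Ioc
    intro v hv
    simp only
    rw [max_eq_left (le_of_lt hv.1), hsplit v]
  rw [part1, part2]
  -- integration by parts
  have hibp := intervalIntegral.integral_mul_deriv_eq_deriv_mul
    (u := F) (v := G) (u' := f) (v' := g)
    (fun x _ => hFd x) (fun x _ => hGd x)
    (hfc.intervalIntegrable V_R V_F) (hgc.intervalIntegrable V_R V_F)
  have hFR : F V_R = 0 := by rw [hFdef]; simp
  have hGR : G V_R = 0 := by rw [hGdef]; simp
  rw [hFR, hGR] at hibp
  have hexp : (∫ v in V_R..V_F, f v * (G V_F - G v))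
      = G V_F * F V_F - ∫ v in V_R..V_F, f v * G v := by
    have h1 : (∫ v in V_R..V_F, f v * (G V_F - G v))
        = (∫ v in V_R..V_F, f v * G V_F) - ∫ v in V_R..V_F, f v * G v := by
      rw [← intervalIntegral.integral_sub (f := fun v => f v * G V_F) (g := fun v => f v * G v) ((hfc.mul continuous_const).intervalIntegrable _ _)
        ((hfc.mul hGc).intervalIntegrable _ _)]
      congr 1; ext v; ring
    rw [h1, intervalIntegral.integral_mul_const]
    have hFV : (∫ x in V_R..V_F, f x) = F V_F := rfl
    rw [hFV]; ring
  rw [hexp]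
  -- rewrite RHS
  have hPhi : ∀ w : ℝ, (∫ v in Iic w, f v) = A + F w := by
    intro w
    have h := intervalIntegral.integral_Iic_sub_Iic hfi.integrableOn hfi.integrableOn
      (a := V_R) (b := w)
    rw [hFdef]; simp only; linarith
  have hrhs : (∫ w in V_R..V_F, g w * ∫ v in Iic w, f v)
      = A * G V_F + ∫ w in V_R..V_F, F w * g w := by
    have h1 : (∫ w in V_R..V_F, g w * ∫ v in Iic w, f v)
        = ∫ w in V_R..V_F, (g w * A + F w * g w) := by
      apply intervalIntegral.integral_congr
      intro w _
      show g w * (∫ v in Iic w, f v) = g w * A + F w * g w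
      rw [hPhi w]; ring
    rw [h1, intervalIntegral.integral_add (f := fun w => g w * A) (g := fun w => F w * g w) ((hgc.mul continuous_const).intervalIntegrable _ _)
      ((hFc.mul hgc).intervalIntegrable _ _), intervalIntegral.integral_mul_const]
    have hGV : (∫ w in V_R..V_F, g w) = G V_F := rfl
    rw [hGV]; ring
  rw [hrhs, hibp]
  ring

open Set in
lemma NNLIF_rhs (m V_R V_F : ℝ) (hV : V_R < V_F) :
    (∫ s in Ioi (0:ℝ), s⁻¹ * Real.exp (-s ^ 2 / 2) * Real.exp (-(s * m)) *
        (Real.exp (s * V_F) - Real.exp (s * V_R)))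
    = ∫ w in Ioc V_R V_F,
        Real.exp ((w - m) ^ 2 / 2) * ∫ v in Iic w, Real.exp (-(v - m) ^ 2 / 2) := by
  have hpt : ∀ s ∈ Ioi (0:ℝ),
      s⁻¹ * Real.exp (-s ^ 2 / 2) * Real.exp (-(s * m)) *
        (Real.exp (s * V_F) - Real.exp (s * V_R))
      = ∫ w in Ioc V_R V_F, Real.exp (-s ^ 2 / 2 + (w - m) * s) := by
    intro s hs
    have hs0 : s ≠ 0 := ne_of_gt hs
    rw [← intervalIntegral.integral_of_le hV.le]
    have h1 : ∀ w : ℝ, Real.exp (-s ^ 2 / 2 + (w - m) * s)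
        = (Real.exp (-s ^ 2 / 2) * Real.exp (-(s * m))) * Real.exp (w * s) := by
      intro w
      rw [← Real.exp_add, ← Real.exp_add]
      ring_nf
    simp_rw [h1]
    rw [intervalIntegral.integral_const_mul]
    rw [intervalIntegral.integral_comp_mul_right Real.exp hs0, integral_exp]
    rw [smul_eq_mul]
    ring_nf
  rw [setIntegral_congr_fun measurableSet_Ioi hpt]
  -- Fubini
  have hcont : Continuous (Function.uncurry fun s w : ℝ =>
      Real.exp (-s ^ 2 / 2 + (w - m) * s)) := by
    apply Real.continuous_exp.comp
    fun_prop
  have haesm : AEStronglyMeasurable (Function.uncurry fun s w : ℝ =>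
      Real.exp (-s ^ 2 / 2 + (w - m) * s))
      ((volume.restrict (Ioi 0)).prod (volume.restrict (Ioc V_R V_F))) :=
    hcont.aestronglyMeasurable
  have hIntProd : Integrable (Function.uncurry fun s w : ℝ =>
      Real.exp (-s ^ 2 / 2 + (w - m) * s))
      ((volume.restrict (Ioi 0)).prod (volume.restrict (Ioc V_R V_F))) := by
    rw [integrable_prod_iff haesm]
    constructor
    · apply Eventually.of_forall
      intro s
      exact (Continuous.integrableOn_Ioc (by fun_prop))
    · apply Integrable.mono'
        (g := fun s => Real.exp (-s ^ 2 / 2 + (V_F - m) * s) * (V_F - V_R))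
      · exact ((NNLIF_quad_int (V_F - m)).mul_const (V_F - V_R)).restrict
      · exact haesm.norm.integral_prod_right'
      · rw [ae_restrict_iff' measurableSet_Ioi]
        apply Eventually.of_forall
        intro s hs
        have hb : ∀ w ∈ Ioc V_R V_F,
            ‖‖Real.exp (-s ^ 2 / 2 + (w - m) * s)‖‖ ≤ Real.exp (-s ^ 2 / 2 + (V_F - m) * s) := by
          intro w hw
          simp only [Real.norm_eq_abs, abs_abs, Real.abs_exp]
          apply Real.exp_le_exp.mpr
          apply add_le_add le_rfl
          exact mul_le_mul_of_nonneg_right (by linarith [hw.2] : w - m ≤ V_F - m) (le_of_lt hs)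
        have := norm_setIntegral_le_of_norm_le_const (μ := volume)
          (s := Ioc V_R V_F) (by simp : volume (Ioc V_R V_F) < ⊤) hb
        calc ‖∫ w in Ioc V_R V_F, ‖Real.exp (-s ^ 2 / 2 + (w - m) * s)‖‖
            ≤ Real.exp (-s ^ 2 / 2 + (V_F - m) * s) * (volume (Ioc V_R V_F)).toReal := this
          _ = Real.exp (-s ^ 2 / 2 + (V_F - m) * s) * (V_F - V_R) := by
              rw [Real.volume_Ioc, ENNReal.toReal_ofReal (by linarith)]
  have hswap := integral_integral_swap hIntProd
  rw [hswap]
  apply setIntegral_congr_fun measurableSet_Ioc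
  intro w _
  show (∫ s in Ioi (0:ℝ), Real.exp (-s ^ 2 / 2 + (w - m) * s)) = _
  exact NNLIF_key_sub m w

/-- For every `b ∈ ℝ`, `V_R < V_F` and `N ≥ 0`, the double integral `I(N)` admits the
one-dimensional representation
`I(N) = ∫_0^∞ s⁻¹ e^{-s²/2} e^{-sbN} (e^{s V_F} − e^{s V_R}) ds`. -/
theorem Ifun_eq_integral_Ioi (b V_R V_F : ℝ) (hV : V_R < V_F) (N : ℝ) (hN : 0 ≤ N) :
    Ifun b V_R V_F N =
      ∫ s in Set.Ioi (0 : ℝ),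
        s⁻¹ * Real.exp (-s ^ 2 / 2) * Real.exp (-(s * b * N)) *
          (Real.exp (s * V_F) - Real.exp (s * V_R)) := by
  rw [Ifun]
  simp_rw [show ∀ s : ℝ, s * b * N = s * (b * N) from fun s => mul_assoc s b N]
  rw [NNLIF_lhs (b * N) V_R V_F hV, intervalIntegral.integral_of_le hV.le,
    ← NNLIF_rhs (b * N) V_R V_F hV]
end

section
/- If b > 0 then I is strictly decreasing on [0,∞) (equivalently, N ↦ 1/I(N) is strictly increasing), and if b < 0 then I is strictly increasing on [0,∞) (equivalently, N ↦ 1/I(N) is strictly decreasing). -/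
open MeasureTheory Real Filter

open scoped ENNReal

noncomputable def Ffun (V_R V_F c v : ℝ) : ℝ :=
  Real.exp (-(v - c) ^ 2 / 2) * ∫ w in (max v V_R)..V_F, Real.exp ((w - c) ^ 2 / 2)

noncomputable def Jfun (V_R V_F c : ℝ) : ℝ := ∫ v in Set.Iic V_F, Ffun V_R V_F c v

section Aux

variable (V_R V_F : ℝ)

lemma contExp (c : ℝ) : Continuous fun w : ℝ => Real.exp ((w - c) ^ 2 / 2) := by
  fun_prop

lemma contG (c : ℝ) :
    Continuous fun v : ℝ => ∫ w in (max v V_R)..V_F, Real.exp ((w - c) ^ 2 / 2) := by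
  have hint : ∀ a b : ℝ, IntervalIntegrable (fun w => Real.exp ((w - c) ^ 2 / 2)) volume a b :=
    fun a b => (contExp c).intervalIntegrable a b
  have hprim : Continuous fun x : ℝ => ∫ w in V_R..x, Real.exp ((w - c) ^ 2 / 2) :=
    intervalIntegral.continuous_primitive hint V_R
  have heq : ∀ v : ℝ, (∫ w in (max v V_R)..V_F, Real.exp ((w - c) ^ 2 / 2)) =
      (∫ w in V_R..V_F, Real.exp ((w - c) ^ 2 / 2)) -
        ∫ w in V_R..(max v V_R), Real.exp ((w - c) ^ 2 / 2) := by
    intro v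
    rw [eq_sub_iff_add_eq, add_comm, intervalIntegral.integral_add_adjacent_intervals
      (hint V_R (max v V_R)) (hint (max v V_R) V_F)]
  simp only [heq]
  exact continuous_const.sub (hprim.comp (continuous_id.max continuous_const))

lemma contF (c : ℝ) : Continuous (Ffun V_R V_F c) :=
  (Continuous.rexp (by fun_prop)).mul (contG V_R V_F c)

variable (hV : V_R < V_F)
include hV

lemma F_nonneg (c : ℝ) {v : ℝ} (hv : v ≤ V_F) : 0 ≤ Ffun V_R V_F c v := by
  apply mul_nonneg (Real.exp_pos _).le
  exact intervalIntegral.integral_nonneg (max_le hv hV.le)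
    (fun u _ => (Real.exp_pos _).le)

lemma F_pos (c : ℝ) {v : ℝ} (hv : v < V_F) : 0 < Ffun V_R V_F c v := by
  apply mul_pos (Real.exp_pos _)
  exact intervalIntegral.intervalIntegral_pos_of_pos
    ((contExp c).intervalIntegrable _ _) (fun x => Real.exp_pos _) (max_lt hv hV)

omit hV in
lemma F_eq_intervalIntegral (c v : ℝ) :
    Ffun V_R V_F c v =
      ∫ w in (max v V_R)..V_F, Real.exp ((w - c) ^ 2 / 2 + -(v - c) ^ 2 / 2) := by
  rw [Ffun, ← intervalIntegral.integral_const_mul]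
  congr 1 with w
  rw [← Real.exp_add, add_comm]

lemma F_strict_anti {c₁ c₂ : ℝ} (hc : c₁ < c₂) {v : ℝ} (hv : v < V_F) :
    Ffun V_R V_F c₂ v < Ffun V_R V_F c₁ v := by
  rw [F_eq_intervalIntegral, F_eq_intervalIntegral]
  have hmax : max v V_R < V_F := max_lt hv hV
  have hvle : v ≤ max v V_R := le_max_left _ _
  apply intervalIntegral.integral_lt_integral_of_continuousOn_of_le_of_exists_lt hmax
    (Continuous.continuousOn (by fun_prop)) (Continuous.continuousOn (by fun_prop))
  · intro w hw
    have hwv : v < w := lt_of_le_of_lt hvle hw.1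
    apply Real.exp_le_exp.2
    nlinarith
  · refine ⟨V_F, ⟨hmax.le, le_refl _⟩, Real.exp_lt_exp.2 ?_⟩
    nlinarith

lemma F_integrableOn (c : ℝ) : IntegrableOn (Ffun V_R V_F c) (Set.Iic V_F) := by
  set M : ℝ := max |V_R - c| |V_F - c| with hM
  set C : ℝ := (V_F - V_R) * Real.exp (M ^ 2 / 2) with hC
  have hCnn : 0 ≤ Real.exp (M ^ 2 / 2) := (Real.exp_pos _).le
  have hgauss : Integrable (fun v : ℝ => C * Real.exp (-(v - c) ^ 2 / 2)) := by
    have h1 : Integrable (fun x : ℝ => Real.exp (-(1/2 : ℝ) * x ^ 2)) :=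
      integrable_exp_neg_mul_sq (by norm_num)
    have h2 := (h1.comp_sub_right c).const_mul C
    refine h2.congr (Eventually.of_forall fun x => ?_)
    simp only [Function.comp]
    ring_nf
  refine Integrable.mono' hgauss.restrict ((contF V_R V_F c).aestronglyMeasurable.restrict) ?_
  refine (ae_restrict_iff' measurableSet_Iic).2 (Eventually.of_forall fun v hv => ?_)
  rw [Real.norm_eq_abs, abs_of_nonneg (F_nonneg V_R V_F hV c hv)]
  rw [Ffun, mul_comm C]
  apply mul_le_mul_of_nonneg_left _ (Real.exp_pos _).le
  calc (∫ w in (max v V_R)..V_F, Real.exp ((w - c) ^ 2 / 2))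
      ≤ ∫ _ in (max v V_R)..V_F, Real.exp (M ^ 2 / 2) := by
        apply intervalIntegral.integral_mono_on (max_le hv hV.le)
          ((contExp c).intervalIntegrable _ _) intervalIntegrable_const
        intro w hw
        apply Real.exp_le_exp.2
        have h1 : V_R ≤ w := le_trans (le_max_right _ _) hw.1
        have h2 : w ≤ V_F := hw.2
        have hl : -M ≤ w - c := by
          calc -M ≤ -|V_R - c| := by simp [hM]
            _ ≤ V_R - c := neg_abs_le _
            _ ≤ w - c := by linarith
        have hr : w - c ≤ M := by
          calc w - c ≤ V_F - c := by linarith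
            _ ≤ |V_F - c| := le_abs_self _
            _ ≤ M := le_max_right _ _
        nlinarith
    _ ≤ C := by
        rw [intervalIntegral.integral_const, smul_eq_mul, hC]
        apply mul_le_mul_of_nonneg_right _ hCnn
        have := le_max_right v V_R
        linarith [le_max_right v V_R]

lemma J_pos (c : ℝ) : 0 < Jfun V_R V_F c := by
  rw [Jfun]
  rw [setIntegral_pos_iff_support_of_nonneg_ae
    ((ae_restrict_iff' measurableSet_Iic).2
      (Eventually.of_forall fun v hv => F_nonneg V_R V_F hV c hv))
    (F_integrableOn V_R V_F hV c)]
  have hsub : Set.Iio V_F ⊆ Function.support (Ffun V_R V_F c) ∩ Set.Iic V_F :=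
    fun v hv => ⟨(F_pos V_R V_F hV c hv).ne', Set.mem_Iic.2 hv.le⟩
  calc (0 : ℝ≥0∞) < volume (Set.Iio V_F) := by simp
    _ ≤ _ := measure_mono hsub

lemma J_strict_anti {c₁ c₂ : ℝ} (hc : c₁ < c₂) : Jfun V_R V_F c₂ < Jfun V_R V_F c₁ := by
  rw [Jfun, Jfun, ← sub_pos, ← integral_sub (F_integrableOn V_R V_F hV c₁)
    (F_integrableOn V_R V_F hV c₂)]
  rw [setIntegral_pos_iff_support_of_nonneg_ae]
  · have hsub : Set.Iio V_F ⊆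
        Function.support (fun v => Ffun V_R V_F c₁ v - Ffun V_R V_F c₂ v) ∩ Set.Iic V_F :=
      fun v hv => ⟨(sub_pos.2 (F_strict_anti V_R V_F hV hc hv)).ne', Set.mem_Iic.2 hv.le⟩
    calc (0 : ℝ≥0∞) < volume (Set.Iio V_F) := by simp
      _ ≤ _ := measure_mono hsub
  · refine (ae_restrict_iff' measurableSet_Iic).2 (Eventually.of_forall fun v hv => ?_)
    rcases eq_or_lt_of_le (Set.mem_Iic.1 hv) with h | h
    · have hz : ∀ c : ℝ, Ffun V_R V_F c v = 0 := by
        intro c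
        rw [Ffun, h, max_eq_left hV.le, intervalIntegral.integral_same, mul_zero]
      simp [hz]
    · exact sub_nonneg.2 (F_strict_anti V_R V_F hV hc h).le
  · exact (F_integrableOn V_R V_F hV c₁).sub (F_integrableOn V_R V_F hV c₂)

end Aux

/-- If `b > 0` then `I` is strictly decreasing on `[0,∞)` (equivalently `N ↦ 1/I(N)` is
strictly increasing there), and if `b < 0` then `I` is strictly increasing on `[0,∞)`
(equivalently `N ↦ 1/I(N)` is strictly decreasing there). -/
theorem Ifun_strict_monotonicity (b V_R V_F : ℝ) (hV : V_R < V_F) :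
    (0 < b →
      StrictAntiOn (fun N => Ifun b V_R V_F N) (Set.Ici 0) ∧
      StrictMonoOn (fun N => 1 / Ifun b V_R V_F N) (Set.Ici 0)) ∧
    (b < 0 →
      StrictMonoOn (fun N => Ifun b V_R V_F N) (Set.Ici 0) ∧
      StrictAntiOn (fun N => 1 / Ifun b V_R V_F N) (Set.Ici 0)) := by
  have key : ∀ N : ℝ, Ifun b V_R V_F N = Jfun V_R V_F (b * N) := fun N => rfl
  constructor
  · intro hb
    have anti : StrictAntiOn (fun N => Ifun b V_R V_F N) (Set.Ici 0) := by
      intro x _ y _ hxy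
      simp only [key]
      exact J_strict_anti V_R V_F hV (mul_lt_mul_of_pos_left hxy hb)
    refine ⟨anti, fun x hx y hy hxy => ?_⟩
    have hpos : 0 < Ifun b V_R V_F y := by rw [key]; exact J_pos V_R V_F hV _
    exact one_div_lt_one_div_of_lt hpos (anti hx hy hxy)
  · intro hb
    have mono : StrictMonoOn (fun N => Ifun b V_R V_F N) (Set.Ici 0) := by
      intro x _ y _ hxy
      simp only [key]
      exact J_strict_anti V_R V_F hV (mul_lt_mul_of_neg_left hxy hb)
    refine ⟨mono, fun x hx y hy hxy => ?_⟩
    have hpos : 0 < Ifun b V_R V_F x := by rw [key]; exact J_pos V_R V_F hV _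
    exact one_div_lt_one_div_of_lt hpos (mono hx hy hxy)
end

section
/- If b > 0, then I(N) → 0 as N → ∞; equivalently, 1/I(N) → +∞ as N → ∞. -/
open MeasureTheory Real Filter Set

-- continuity of the integrand
lemma inner_cont (μ V_R V_F : ℝ) :
    Continuous (fun v : ℝ => ∫ w in (max v V_R)..V_F, Real.exp ((w - μ)^2/2)) := by
  have hc : Continuous fun w : ℝ => Real.exp ((w - μ)^2/2) := by continuity
  have h := intervalIntegral.continuous_primitive (μ := volume)
      (fun a b => (hc.intervalIntegrable a b)) V_F
  have he : (fun v : ℝ => ∫ w in (max v V_R)..V_F, Real.exp ((w - μ)^2/2))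
      = fun v => -∫ w in V_F..(max v V_R), Real.exp ((w - μ)^2/2) := by
    funext v; rw [intervalIntegral.integral_symm]
  rw [he]
  exact (h.comp (continuous_id.max continuous_const)).neg

lemma f_cont (μ V_R V_F : ℝ) :
    Continuous (fun v : ℝ =>
      Real.exp (-(v - μ)^2/2) * ∫ w in (max v V_R)..V_F, Real.exp ((w - μ)^2/2)) := by
  exact (by continuity : Continuous fun v : ℝ => Real.exp (-(v - μ)^2/2)).mul
    (inner_cont μ V_R V_F)

lemma f_nonneg (μ V_R V_F : ℝ) (hV : V_R < V_F) {v : ℝ} (hv : v ≤ V_F) :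
    0 ≤ Real.exp (-(v - μ)^2/2) * ∫ w in (max v V_R)..V_F, Real.exp ((w - μ)^2/2) := by
  apply mul_nonneg (Real.exp_pos _).le
  exact intervalIntegral.integral_nonneg (max_le hv hV.le) (fun w _ => (Real.exp_pos _).le)

lemma f_le_bound (μ V_R V_F : ℝ) (hV : V_R < V_F) (hc : 1 ≤ μ - V_F) {v : ℝ} (hv : v ≤ V_F) :
    Real.exp (-(v - μ)^2/2) * (∫ w in (max v V_R)..V_F, Real.exp ((w - μ)^2/2))
      ≤ Real.exp (v - max v V_R) / (μ - V_F) := by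
  set c := μ - V_F with hcdef
  have hc0 : 0 < c := lt_of_lt_of_le one_pos hc
  set m := max v V_R with hm
  have hvm : v ≤ m := le_max_left _ _
  have hmF : m ≤ V_F := max_le hv hV.le
  have h1 : Real.exp (-(v - μ)^2/2) * (∫ w in m..V_F, Real.exp ((w - μ)^2/2))
      = ∫ w in m..V_F, Real.exp (-(v - μ)^2/2 + (w - μ)^2/2) := by
    rw [← intervalIntegral.integral_const_mul]
    exact intervalIntegral.integral_congr fun w _ => (Real.exp_add _ _).symm
  have h2 : (∫ w in m..V_F, Real.exp (-(v - μ)^2/2 + (w - μ)^2/2))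
      ≤ ∫ w in m..V_F, Real.exp (-(c * (w - v))) := by
    apply intervalIntegral.integral_mono_on hmF
    · exact Continuous.intervalIntegrable (by continuity) _ _
    · exact Continuous.intervalIntegrable (by continuity) _ _
    · intro w hw
      apply Real.exp_le_exp.2
      obtain ⟨hw1, hw2⟩ := hw
      have hvw : v ≤ w := hvm.trans hw1
      nlinarith
  have h3 : (∫ w in m..V_F, Real.exp (-(c * (w - v))))
      = (Real.exp (-(c*(m - v))) - Real.exp (-(c*(V_F - v))))/c := by
    have hderiv : ∀ w ∈ Set.uIcc m V_F, HasDerivAt (fun w => -(Real.exp (-(c*(w - v)))/c))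
        (Real.exp (-(c*(w - v)))) w := by
      intro w _
      have hg : HasDerivAt (fun w : ℝ => -(c*(w-v))) (-c) w := by
        exact (by simpa using ((hasDerivAt_id w).sub_const v).const_mul c : HasDerivAt (fun y : ℝ => c*(y-v)) c w).neg
      have h := (Real.hasDerivAt_exp (-(c*(w-v)))).comp w hg
      have h2 : HasDerivAt (fun w => -(Real.exp (-(c*(w - v)))/c)) (-(Real.exp (-(c*(w-v))) * -c / c)) w := (h.div_const c).neg
      convert h2 using 1
      field_simp [hc0.ne']
    rw [intervalIntegral.integral_eq_sub_of_hasDerivAt hderiv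
      (Continuous.intervalIntegrable (by continuity) _ _)]
    ring
  calc Real.exp (-(v - μ)^2/2) * (∫ w in m..V_F, Real.exp ((w - μ)^2/2))
      ≤ (Real.exp (-(c*(m - v))) - Real.exp (-(c*(V_F - v))))/c := by
        rw [h1, ← h3]; exact h2
    _ ≤ Real.exp (-(c*(m - v)))/c := by
        apply div_le_div_of_nonneg_right ?_ hc0.le |>.trans_eq rfl
        · linarith [(Real.exp_pos (-(c*(V_F - v)))).le]
    _ ≤ Real.exp (v - m)/c := by
        apply div_le_div_of_nonneg_right ?_ hc0.le
        apply Real.exp_le_exp.2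
        nlinarith

lemma bound_integrableOn (V_R V_F : ℝ) (hV : V_R < V_F) :
    IntegrableOn (fun v : ℝ => Real.exp (v - max v V_R)) (Set.Iic V_F) := by
  have hsplit : Set.Iic V_R ∪ Set.Ioc V_R V_F = Set.Iic V_F := Set.Iic_union_Ioc_eq_Iic hV.le
  rw [← hsplit]
  apply IntegrableOn.union
  · apply IntegrableOn.congr_fun (f := fun v : ℝ => Real.exp v * Real.exp (-V_R))
    · exact (integrableOn_exp_Iic V_R).mul_const _
    · intro v hv
      simp only [max_eq_right (Set.mem_Iic.1 hv), ← Real.exp_add]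
      ring_nf
    · exact measurableSet_Iic
  · apply IntegrableOn.congr_fun (f := fun _ : ℝ => (1:ℝ))
    · exact integrableOn_const measure_Ioc_lt_top.ne
    · intro v hv
      simp only [max_eq_left (le_of_lt hv.1), sub_self, Real.exp_zero]
    · exact measurableSet_Ioc

lemma bound_integral (V_R V_F : ℝ) (hV : V_R < V_F) :
    ∫ v in Set.Iic V_F, Real.exp (v - max v V_R) = 1 + (V_F - V_R) := by
  have hsplit : Set.Iic V_R ∪ Set.Ioc V_R V_F = Set.Iic V_F := Set.Iic_union_Ioc_eq_Iic hV.le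
  have hint := bound_integrableOn V_R V_F hV
  rw [← hsplit] at hint ⊢
  rw [setIntegral_union (Set.Iic_disjoint_Ioc le_rfl) measurableSet_Ioc
    (hint.mono_set Set.subset_union_left) (hint.mono_set Set.subset_union_right)]
  have h1 : ∫ v in Set.Iic V_R, Real.exp (v - max v V_R) = 1 := by
    rw [setIntegral_congr_fun measurableSet_Iic
      (g := fun v : ℝ => Real.exp v * Real.exp (-V_R))
      (fun v hv => by simp only [max_eq_right (Set.mem_Iic.1 hv), ← Real.exp_add]; ring_nf)]
    rw [integral_mul_const, integral_exp_Iic, ← Real.exp_add]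
    simp
  have h2 : ∫ v in Set.Ioc V_R V_F, Real.exp (v - max v V_R) = V_F - V_R := by
    rw [setIntegral_congr_fun measurableSet_Ioc (g := fun _ : ℝ => (1:ℝ))
      (fun v hv => by simp only [max_eq_left (le_of_lt hv.1), sub_self, Real.exp_zero])]
    simp [Real.volume_Ioc, ENNReal.toReal_ofReal (sub_nonneg.2 hV.le), hV.le]
  rw [h1, h2]

lemma Ifun_integrableOn (μ V_R V_F : ℝ) (hV : V_R < V_F) (hc : 1 ≤ μ - V_F) :
    IntegrableOn (fun v : ℝ =>
      Real.exp (-(v - μ)^2/2) * ∫ w in (max v V_R)..V_F, Real.exp ((w - μ)^2/2))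
      (Set.Iic V_F) := by
  apply Integrable.mono' ((bound_integrableOn V_R V_F hV).div_const (μ - V_F))
    (f_cont μ V_R V_F).aestronglyMeasurable.restrict
  filter_upwards [ae_restrict_mem measurableSet_Iic] with v hv
  rw [Real.norm_eq_abs, abs_of_nonneg (f_nonneg μ V_R V_F hV hv)]
  exact f_le_bound μ V_R V_F hV hc hv

lemma Ifun_pos' (μ V_R V_F : ℝ) (hV : V_R < V_F) (hc : 1 ≤ μ - V_F) :
    0 < ∫ v in Set.Iic V_F,
      Real.exp (-(v - μ)^2/2) * ∫ w in (max v V_R)..V_F, Real.exp ((w - μ)^2/2) := by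
  have hint := Ifun_integrableOn μ V_R V_F hV hc
  have key : 0 < ∫ v in V_R..V_F,
      Real.exp (-(v - μ)^2/2) * ∫ w in (max v V_R)..V_F, Real.exp ((w - μ)^2/2) := by
    apply intervalIntegral.intervalIntegral_pos_of_pos_on ((f_cont μ V_R V_F).intervalIntegrable _ _) _ hV
    intro x hx
    apply mul_pos (Real.exp_pos _)
    exact intervalIntegral.intervalIntegral_pos_of_pos
      (Continuous.intervalIntegrable (by continuity) _ _)
      (fun w => Real.exp_pos _) (max_lt hx.2 hV)
  rw [intervalIntegral.integral_of_le hV.le] at key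
  refine lt_of_lt_of_le key (setIntegral_mono_set hint ?_ (Set.Ioc_subset_Iic_self).eventuallyLE)
  filter_upwards [ae_restrict_mem measurableSet_Iic] with v hv
  exact f_nonneg μ V_R V_F hV hv

lemma Ifun_norm_le (μ V_R V_F : ℝ) (hV : V_R < V_F) (hc : 1 ≤ μ - V_F) :
    ‖∫ v in Set.Iic V_F,
      Real.exp (-(v - μ)^2/2) * ∫ w in (max v V_R)..V_F, Real.exp ((w - μ)^2/2)‖
      ≤ (1 + (V_F - V_R)) / (μ - V_F) := by
  have hb : ∀ᵐ v ∂(volume.restrict (Set.Iic V_F)),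
      ‖Real.exp (-(v - μ)^2/2) * ∫ w in (max v V_R)..V_F, Real.exp ((w - μ)^2/2)‖
        ≤ Real.exp (v - max v V_R) / (μ - V_F) := by
    filter_upwards [ae_restrict_mem measurableSet_Iic] with v hv
    rw [Real.norm_eq_abs, abs_of_nonneg (f_nonneg μ V_R V_F hV hv)]
    exact f_le_bound μ V_R V_F hV hc hv
  have h := norm_integral_le_of_norm_le
    ((bound_integrableOn V_R V_F hV).div_const (μ - V_F)) hb
  refine h.trans_eq ?_
  rw [integral_div, bound_integral V_R V_F hV]

/-- If `b > 0`, then `I(N) → 0` as `N → ∞`; equivalently, `1/I(N) → +∞` as `N → ∞`. -/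
theorem Ifun_tendsto_zero_atTop (b V_R V_F : ℝ) (hV : V_R < V_F) (hb : 0 < b) :
    Tendsto (fun N => Ifun b V_R V_F N) atTop (nhds 0) ∧
    Tendsto (fun N => 1 / Ifun b V_R V_F N) atTop atTop := by
  have hc : ∀ᶠ N in atTop, 1 ≤ b * N - V_F := by
    filter_upwards [eventually_ge_atTop ((V_F + 1) / b)] with N hN
    rw [div_le_iff₀ hb] at hN
    linarith
  have hlin : Tendsto (fun N => b * N - V_F) atTop atTop := by
    simpa [sub_eq_add_neg] using
      tendsto_atTop_add_const_right atTop (-V_F) (tendsto_id.const_mul_atTop hb)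
  have h0 : Tendsto (fun N => Ifun b V_R V_F N) atTop (nhds 0) := by
    apply squeeze_zero_norm' (a := fun N => (1 + (V_F - V_R)) / (b * N - V_F))
    · filter_upwards [hc] with N hN
      exact Ifun_norm_le (b * N) V_R V_F hV hN
    · exact Tendsto.div_atTop tendsto_const_nhds hlin
  refine ⟨h0, ?_⟩
  have hpos : ∀ᶠ N in atTop, Ifun b V_R V_F N ∈ Set.Ioi (0:ℝ) := by
    filter_upwards [hc] with N hN
    exact Ifun_pos' (b * N) V_R V_F hV hN
  have := (tendsto_nhdsWithin_iff.mpr ⟨h0, hpos⟩).inv_tendsto_nhdsGT_zero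
  simp only [one_div]
  exact this
end

section
/- If b ≤ 0, then the equation N·I(N) = 1 has exactly one solution N* in [0,∞), and N* > 0; equivalently, the map f(N) := 1/I(N) has a unique fixed point on [0,∞). Moreover this fixed point lies in the interval (0, 1/I(0)]. -/
open MeasureTheory Real Filter

namespace IfunAux

open Set intervalIntegral

/-- The inner integral, as a function of the pair `(N, v)`. -/
noncomputable def inn (b V_R V_F : ℝ) (p : ℝ × ℝ) : ℝ :=
  ∫ w in (max p.2 V_R)..V_F, Real.exp ((w - b * p.1) ^ 2 / 2)

/-- The integrand of the outer integral, as a function of the pair `(N, v)`. -/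
noncomputable def h (b V_R V_F : ℝ) (p : ℝ × ℝ) : ℝ :=
  Real.exp (-(p.2 - b * p.1) ^ 2 / 2) * inn b V_R V_F p

theorem cont_h (b V_R V_F : ℝ) : Continuous (h b V_R V_F) := by
  apply Continuous.mul
  · fun_prop
  · have key : Continuous fun p : ℝ × ℝ =>
        ∫ w in V_F..(max p.2 V_R), Real.exp ((w - b * p.1) ^ 2 / 2) := by
      apply intervalIntegral.continuous_parametric_intervalIntegral_of_continuous
      · fun_prop
      · fun_prop
    have h2 : (inn b V_R V_F) = fun p =>
        -(∫ w in V_F..(max p.2 V_R), Real.exp ((w - b * p.1) ^ 2 / 2)) := by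
      funext p
      rw [inn, intervalIntegral.integral_symm]
    rw [h2]
    exact key.neg

theorem inn_nonneg (b V_R V_F : ℝ) (hV : V_R ≤ V_F) {N v : ℝ} (hv : v ≤ V_F) :
    0 ≤ inn b V_R V_F (N, v) := by
  apply intervalIntegral.integral_nonneg (max_le hv hV)
  intro w _
  positivity

theorem h_nonneg (b V_R V_F : ℝ) (hV : V_R ≤ V_F) {N v : ℝ} (hv : v ≤ V_F) :
    0 ≤ h b V_R V_F (N, v) :=
  mul_nonneg (exp_nonneg _) (inn_nonneg b V_R V_F hV hv)

/-- Uniform bound on `h` for `|b*N| ≤ A` and `v ≤ V_F`. -/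
theorem h_le (b V_R V_F : ℝ) (hV : V_R ≤ V_F) {A N v : ℝ} (hA : |b * N| ≤ A) (hv : v ≤ V_F) :
    h b V_R V_F (N, v) ≤
      (V_F - V_R) * Real.exp ((|V_R| + |V_F| + A) ^ 2 / 2) * Real.exp (A ^ 2 / 2)
        * Real.exp (-v ^ 2 / 4) := by
  have hA0 : 0 ≤ A := le_trans (abs_nonneg _) hA
  have hbound : inn b V_R V_F (N, v) ≤ (V_F - V_R) * Real.exp ((|V_R| + |V_F| + A) ^ 2 / 2) := by
    have hcle : max v V_R ≤ V_F := max_le hv hV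
    calc inn b V_R V_F (N, v)
        ≤ ∫ w in (max v V_R)..V_F, Real.exp ((|V_R| + |V_F| + A) ^ 2 / 2) := by
          apply intervalIntegral.integral_mono_on hcle
          · apply Continuous.intervalIntegrable; fun_prop
          · exact intervalIntegrable_const
          · intro w hw
            apply Real.exp_le_exp.2
            have hw1 : V_R ≤ w := le_trans (le_max_right _ _) hw.1
            have hw2 : w ≤ V_F := hw.2
            have habs : |w - b * N| ≤ |V_R| + |V_F| + A := by
              have : |w| ≤ |V_R| + |V_F| := by
                rcases abs_cases w with ⟨he, _⟩ | ⟨he, _⟩ <;>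
                  rcases abs_cases V_R with ⟨h1, _⟩ | ⟨h1, _⟩ <;>
                  rcases abs_cases V_F with ⟨h2, _⟩ | ⟨h2, _⟩ <;>
                  nlinarith [abs_nonneg V_R, abs_nonneg V_F]
              calc |w - b * N| ≤ |w| + |b * N| := abs_sub _ _
                _ ≤ |V_R| + |V_F| + A := by linarith
            have := sq_le_sq' (neg_le_of_abs_le habs) (le_of_abs_le habs)
            linarith
      _ ≤ (V_F - V_R) * Real.exp ((|V_R| + |V_F| + A) ^ 2 / 2) := by
          rw [intervalIntegral.integral_const, smul_eq_mul]
          apply mul_le_mul_of_nonneg_right _ (exp_nonneg _)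
          have := le_max_right v V_R
          linarith
  have hgauss : Real.exp (-(v - b * N) ^ 2 / 2) ≤ Real.exp (A ^ 2 / 2) * Real.exp (-v ^ 2 / 4) := by
    rw [← Real.exp_add]
    apply Real.exp_le_exp.2
    have h1 : v ^ 2 ≤ 2 * (v - b * N) ^ 2 + 2 * (b * N) ^ 2 := by
      nlinarith [sq_nonneg (v - 2 * (b * N))]
    have h2 : (b * N) ^ 2 ≤ A ^ 2 := sq_le_sq' (neg_le_of_abs_le hA) (le_of_abs_le hA)
    nlinarith
  calc h b V_R V_F (N, v)
      ≤ Real.exp (-(v - b * N) ^ 2 / 2) * ((V_F - V_R) * Real.exp ((|V_R| + |V_F| + A) ^ 2 / 2)) :=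
        mul_le_mul_of_nonneg_left hbound (exp_nonneg _)
    _ ≤ (Real.exp (A ^ 2 / 2) * Real.exp (-v ^ 2 / 4)) *
        ((V_F - V_R) * Real.exp ((|V_R| + |V_F| + A) ^ 2 / 2)) := by
        apply mul_le_mul_of_nonneg_right hgauss
        exact mul_nonneg (by linarith) (exp_nonneg _)
    _ = (V_F - V_R) * Real.exp ((|V_R| + |V_F| + A) ^ 2 / 2) * Real.exp (A ^ 2 / 2)
        * Real.exp (-v ^ 2 / 4) := by ring

theorem integrable_gauss4 (C : ℝ) : Integrable (fun v : ℝ => C * Real.exp (-v ^ 2 / 4)) := by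
  have key : Integrable (fun v : ℝ => Real.exp (-(1/4 : ℝ) * v ^ 2)) :=
    integrable_exp_neg_mul_sq (by norm_num)
  have h2 : (fun v : ℝ => C * Real.exp (-v ^ 2 / 4)) =
      fun v : ℝ => C * Real.exp (-(1/4 : ℝ) * v ^ 2) := by
    funext v; ring_nf
  rw [h2]
  exact key.const_mul C

theorem integrableOn_h (b V_R V_F : ℝ) (hV : V_R ≤ V_F) (N : ℝ) :
    IntegrableOn (fun v => h b V_R V_F (N, v)) (Iic V_F) := by
  set C := (V_F - V_R) * Real.exp ((|V_R| + |V_F| + |b * N|) ^ 2 / 2) *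
    Real.exp (|b * N| ^ 2 / 2) with hC
  apply Integrable.mono ((integrable_gauss4 C).restrict (s := Iic V_F))
  · have hc : Continuous fun v => h b V_R V_F (N, v) :=
      (cont_h b V_R V_F).comp (by fun_prop)
    exact hc.aestronglyMeasurable
  · rw [ae_restrict_iff' measurableSet_Iic]
    filter_upwards with v hv
    rw [Real.norm_eq_abs, Real.norm_eq_abs, abs_of_nonneg (h_nonneg b V_R V_F hV hv)]
    have hle := h_le b V_R V_F hV (le_refl |b * N|) hv
    calc h b V_R V_F (N, v) ≤ C * Real.exp (-v ^ 2 / 4) := hle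
      _ ≤ |C * Real.exp (-v ^ 2 / 4)| := le_abs_self _

theorem h_mono (b V_R V_F : ℝ) (hb : b ≤ 0) (hV : V_R ≤ V_F) {N₁ N₂ v : ℝ}
    (h0 : 0 ≤ N₁) (hN : N₁ ≤ N₂) (hv : v ≤ V_F) :
    h b V_R V_F (N₁, v) ≤ h b V_R V_F (N₂, v) := by
  clear h0
  have key : ∀ N : ℝ, h b V_R V_F (N, v) =
      ∫ w in (max v V_R)..V_F, Real.exp (-(v - b * N) ^ 2 / 2 + (w - b * N) ^ 2 / 2) := by
    intro N
    rw [h, inn, ← intervalIntegral.integral_const_mul]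
    simp only [← Real.exp_add]
  rw [key N₁, key N₂]
  apply intervalIntegral.integral_mono_on (max_le hv hV)
  · apply Continuous.intervalIntegrable; fun_prop
  · apply Continuous.intervalIntegrable; fun_prop
  · intro w hw
    apply Real.exp_le_exp.2
    have hvw : v ≤ w := le_trans (le_max_left _ _) hw.1
    nlinarith [mul_nonneg (mul_nonneg (neg_nonneg.2 hb) (sub_nonneg.2 hN)) (sub_nonneg.2 hvw)]

theorem h_pos (b V_R V_F : ℝ) (hV : V_R < V_F) {N v : ℝ} (hv : v < V_F) :
    0 < h b V_R V_F (N, v) := by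
  apply mul_pos (exp_pos _)
  rw [inn]
  apply intervalIntegral.intervalIntegral_pos_of_pos_on
  · apply Continuous.intervalIntegrable; fun_prop
  · intro w _; exact exp_pos _
  · exact max_lt hv hV

theorem Ifun_eq (b V_R V_F N : ℝ) :
    Ifun b V_R V_F N = ∫ v in Set.Iic V_F, h b V_R V_F (N, v) := rfl

theorem Ifun_mono (b V_R V_F : ℝ) (hb : b ≤ 0) (hV : V_R ≤ V_F) {N₁ N₂ : ℝ}
    (h0 : 0 ≤ N₁) (hN : N₁ ≤ N₂) : Ifun b V_R V_F N₁ ≤ Ifun b V_R V_F N₂ := by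
  rw [Ifun_eq, Ifun_eq]
  apply setIntegral_mono_on (integrableOn_h b V_R V_F hV N₁) (integrableOn_h b V_R V_F hV N₂)
    measurableSet_Iic
  intro v hv
  exact h_mono b V_R V_F hb hV h0 hN hv

theorem Ifun_pos (b V_R V_F : ℝ) (hV : V_R < V_F) (N : ℝ) : 0 < Ifun b V_R V_F N := by
  rw [Ifun_eq]
  have h2 : (0 : ℝ) < ∫ v in Ioc (V_F - 1) V_F, h b V_R V_F (N, v) := by
    rw [← intervalIntegral.integral_of_le (by linarith)]
    apply intervalIntegral.intervalIntegral_pos_of_pos_on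
    · apply Continuous.intervalIntegrable
      exact (cont_h b V_R V_F).comp (by fun_prop)
    · intro v hv; exact h_pos b V_R V_F hV hv.2
    · linarith
  refine lt_of_lt_of_le h2 ?_
  apply setIntegral_mono_set (integrableOn_h b V_R V_F hV.le N)
  · exact (ae_restrict_iff' measurableSet_Iic).2
      (Eventually.of_forall fun v hv => h_nonneg b V_R V_F hV.le hv)
  · exact (Ioc_subset_Iic_self).eventuallyLE

theorem Ifun_continuous (b V_R V_F : ℝ) (hV : V_R ≤ V_F) :
    Continuous fun N => Ifun b V_R V_F N := by
  rw [continuous_iff_continuousAt]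
  intro N₀
  simp only [Ifun_eq]
  set A := |b| * (|N₀| + 1) with hA
  set C := (V_F - V_R) * Real.exp ((|V_R| + |V_F| + A) ^ 2 / 2) * Real.exp (A ^ 2 / 2) with hC
  apply continuousAt_of_dominated (bound := fun v => C * Real.exp (-v ^ 2 / 4))
  · filter_upwards with N
    exact ((cont_h b V_R V_F).comp
      (by fun_prop : Continuous fun v : ℝ => (N, v))).aestronglyMeasurable
  · filter_upwards [Metric.ball_mem_nhds N₀ one_pos] with N hN
    rw [ae_restrict_iff' measurableSet_Iic]
    filter_upwards with v hv
    rw [Real.norm_eq_abs, abs_of_nonneg (h_nonneg b V_R V_F hV hv)]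
    apply h_le b V_R V_F hV _ hv
    rw [abs_mul, hA]
    have hNle : |N| ≤ |N₀| + 1 := by
      have := mem_ball_iff_norm.1 hN
      rw [Real.norm_eq_abs] at this
      calc |N| = |N₀ + (N - N₀)| := by ring_nf
        _ ≤ |N₀| + |N - N₀| := abs_add_le _ _
        _ ≤ |N₀| + 1 := by linarith
    exact mul_le_mul_of_nonneg_left hNle (abs_nonneg b)
  · exact (integrable_gauss4 C).restrict
  · filter_upwards with v
    exact ((cont_h b V_R V_F).comp
      (by fun_prop : Continuous fun N : ℝ => (N, v))).continuousAt

end IfunAux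

/-- If `b ≤ 0`, the equation `N·I(N) = 1` has exactly one solution `N*` on `[0,∞)`;
equivalently `f(N) = 1/I(N)` has a unique fixed point on `[0,∞)`. Moreover this
solution lies in the interval `(0, 1/I(0)]`. -/
theorem Ifun_unique_equilibrium (b V_R V_F : ℝ) (hV : V_R < V_F) (hb : b ≤ 0) :
    (∃! N : ℝ, 0 ≤ N ∧ N * Ifun b V_R V_F N = 1) ∧
    (∃! N : ℝ, 0 ≤ N ∧ 1 / Ifun b V_R V_F N = N) ∧
    (∀ N : ℝ, 0 ≤ N → N * Ifun b V_R V_F N = 1 →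
      0 < N ∧ N ≤ 1 / Ifun b V_R V_F 0) := by
  set I := fun N => Ifun b V_R V_F N with hI
  have hpos : ∀ N, 0 < I N := fun N => IfunAux.Ifun_pos b V_R V_F hV N
  have hmono : ∀ N₁ N₂ : ℝ, 0 ≤ N₁ → N₁ ≤ N₂ → I N₁ ≤ I N₂ :=
    fun N₁ N₂ h0 hle => IfunAux.Ifun_mono b V_R V_F hb hV.le h0 hle
  have hcont : Continuous fun N => N * I N :=
    continuous_id.mul (IfunAux.Ifun_continuous b V_R V_F hV.le)
  -- strict monotonicity of N ↦ N * I N on [0, ∞)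
  have hsm : StrictMonoOn (fun N => N * I N) (Set.Ici (0 : ℝ)) := by
    intro N₁ h1 N₂ h2 h12
    calc N₁ * I N₁ ≤ N₁ * I N₂ := mul_le_mul_of_nonneg_left (hmono _ _ h1 h12.le) h1
      _ < N₂ * I N₂ := mul_lt_mul_of_pos_right h12 (hpos N₂)
  -- existence via IVT
  set N₀ := 2 / I 0 with hN₀
  have hN₀pos : 0 < N₀ := div_pos two_pos (hpos 0)
  have hg : (1 : ℝ) ∈ Set.Icc ((fun N => N * I N) 0) ((fun N => N * I N) N₀) := by
    constructor
    · simp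
    · have hstep : N₀ * I 0 ≤ N₀ * I N₀ :=
        mul_le_mul_of_nonneg_left (hmono 0 N₀ le_rfl hN₀pos.le) hN₀pos.le
      have h2 : N₀ * I 0 = 2 := by
        rw [hN₀, div_mul_cancel₀]
        exact (hpos 0).ne'
      simpa using le_trans (by linarith) hstep
  obtain ⟨Ns, hNs_mem, hNs⟩ := intermediate_value_Icc hN₀pos.le hcont.continuousOn hg
  have hNs0 : 0 ≤ Ns := hNs_mem.1
  -- key equivalence
  have hiff : ∀ N : ℝ, (N * I N = 1) ↔ (1 / I N = N) := by
    intro N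
    rw [div_eq_iff (hpos N).ne']
    constructor <;> intro hx <;> linarith
  have huniq : ∀ N N' : ℝ, 0 ≤ N → N * I N = 1 → 0 ≤ N' → N' * I N' = 1 → N = N' := by
    intro N N' h0 h1 h0' h1'
    exact hsm.injOn h0 h0' (by rw [h1, h1'])
  have hEx1 : ∃! N : ℝ, 0 ≤ N ∧ N * I N = 1 := by
    refine ⟨Ns, ⟨hNs0, hNs⟩, ?_⟩
    rintro N ⟨h0, h1⟩
    exact huniq N Ns h0 h1 hNs0 hNs
  refine ⟨hEx1, ?_, ?_⟩
  · refine ⟨Ns, ⟨hNs0, (hiff Ns).1 hNs⟩, ?_⟩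
    rintro N ⟨h0, h1⟩
    exact huniq N Ns h0 ((hiff N).2 h1) hNs0 hNs
  · intro N h0 h1
    have hNpos : 0 < N := by
      rcases h0.lt_or_eq with h | h
      · exact h
      · exfalso; rw [← h] at h1; simp at h1
    refine ⟨hNpos, ?_⟩
    have hN_eq : N = 1 / I N := ((hiff N).1 h1).symm
    have hle : I 0 ≤ I N := hmono 0 N le_rfl h0
    rw [hN_eq]
    exact one_div_le_one_div_of_le (hpos 0) hle
end

section
/- Assume b > 0 and that there exists N* > 0 with N*·I(N*) = 1 such that N < 1/I(N) for all N ∈ [0, N*) and 1/I(N) < N for all N > N*. Then for any firing rate sequence {N_{k,∞}}: if N_{0,∞} ≥ N* the sequence is monotone decreasing and converges to N*, and if N_{0,∞} ≤ N* the sequence is monotone increasing and converges to N*. -/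
open MeasureTheory Real Filter

noncomputable def Fgauss (s : ℝ) : ℝ := ∫ u in Set.Iic s, Real.exp (-u ^ 2 / 2)

noncomputable def hker (s : ℝ) : ℝ := Real.exp (s ^ 2 / 2) * Fgauss s

lemma integrable_gauss : Integrable (fun u : ℝ => Real.exp (-u ^ 2 / 2)) := by
  have := integrable_exp_neg_mul_sq (by norm_num : (0:ℝ) < 1/2)
  convert this using 2 with u
  ring_nf

lemma integrable_mul_gauss : Integrable (fun u : ℝ => u * Real.exp (-u ^ 2 / 2)) := by
  have := integrable_mul_exp_neg_mul_sq (by norm_num : (0:ℝ) < 1/2)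
  convert this using 2 with u
  ring_nf

lemma Fgauss_pos (s : ℝ) : 0 < Fgauss s := by
  rw [Fgauss]
  apply setIntegral_pos_iff_support_of_nonneg_ae ?_ (integrable_gauss.integrableOn) |>.mpr
  · have : Function.support (fun u : ℝ => Real.exp (-u ^ 2 / 2)) = Set.univ := by
      ext u; simp [Function.mem_support, Real.exp_ne_zero]
    rw [this]
    simp
  · filter_upwards with u using (Real.exp_pos _).le

lemma hasDerivAt_Fgauss (s : ℝ) : HasDerivAt Fgauss (Real.exp (-s ^ 2 / 2)) s := by
  have heq : Fgauss = fun t => (∫ u in (0:ℝ)..t, Real.exp (-u ^ 2 / 2)) + Fgauss 0 := by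
    funext t
    rw [Fgauss, Fgauss, ← intervalIntegral.integral_Iic_sub_Iic integrable_gauss.integrableOn
      integrable_gauss.integrableOn]
    ring
  rw [heq]
  have : HasDerivAt (fun t => ∫ u in (0:ℝ)..t, Real.exp (-u ^ 2 / 2)) (Real.exp (-s ^ 2 / 2)) s := by
    apply intervalIntegral.integral_hasDerivAt_right
      integrable_gauss.intervalIntegrable
      integrable_gauss.aestronglyMeasurable.stronglyMeasurableAtFilter
      (Continuous.continuousAt (by continuity))
  simpa using this.add_const (Fgauss 0)
lemma integral_mul_gauss_Iic (s : ℝ) :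
    ∫ u in Set.Iic s, u * Real.exp (-u ^ 2 / 2) = -Real.exp (-s ^ 2 / 2) := by
  have h := integral_Iic_of_hasDerivAt_of_tendsto'
    (f := fun u : ℝ => -Real.exp (-u ^ 2 / 2))
    (f' := fun u : ℝ => u * Real.exp (-u ^ 2 / 2)) (a := s) (m := 0)
    ?_ integrable_mul_gauss.integrableOn ?_
  · simpa using h
  · intro x _
    have h1 : HasDerivAt (fun u : ℝ => -u ^ 2 / 2) (-x) x := by
      have := ((hasDerivAt_pow 2 x).neg).div_const 2
      exact this.congr_deriv (by ring)
    exact (h1.exp).neg.congr_deriv (by ring)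
  · have hmono : Tendsto (fun u : ℝ => -u ^ 2 / 2) atBot atBot := by
      apply tendsto_atBot_mono' atBot ?_ tendsto_id
      filter_upwards [Filter.Iic_mem_atBot (-2 : ℝ)] with u hu
      have hu' : u ≤ -2 := hu
      simp only [id]
      nlinarith [mul_nonneg (by linarith : (0:ℝ) ≤ -u) (by linarith : (0:ℝ) ≤ -(u+2))]
    simpa using ((Real.tendsto_exp_atBot).comp hmono).neg

lemma hker_pos (s : ℝ) : 0 < hker s := mul_pos (Real.exp_pos _) (Fgauss_pos s)

lemma mills (s : ℝ) : 0 ≤ s * hker s + 1 := by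
  rcases le_or_gt 0 s with hs | hs
  · nlinarith [hker_pos s]
  · have hs0 : s ≠ 0 := hs.ne
    have hF : Fgauss s ≤ -Real.exp (-s ^ 2 / 2) / s := by
      have hint : IntegrableOn (fun u : ℝ => u / s * Real.exp (-u ^ 2 / 2)) (Set.Iic s) := by
        apply Integrable.integrableOn
        exact (integrable_mul_gauss.div_const s).congr (by filter_upwards with u; ring)
      have hmono : Fgauss s ≤ ∫ u in Set.Iic s, u / s * Real.exp (-u ^ 2 / 2) := by
        rw [Fgauss]
        apply setIntegral_mono_on integrable_gauss.integrableOn hint measurableSet_Iic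
        intro u hu
        have hu' : u ≤ s := hu
        have h1 : (1:ℝ) ≤ u / s := by
          rw [le_div_iff_of_neg hs]; simpa using hu'
        nlinarith [Real.exp_pos (-u ^ 2 / 2)]
      have heq : ∫ u in Set.Iic s, u / s * Real.exp (-u ^ 2 / 2)
          = (∫ u in Set.Iic s, u * Real.exp (-u ^ 2 / 2)) / s := by
        rw [← integral_div]
        congr 1 with u
        ring
      rw [heq, integral_mul_gauss_Iic] at hmono
      exact hmono
    have hexp : Real.exp (s ^ 2 / 2) * Real.exp (-s ^ 2 / 2) = 1 := by
      rw [← Real.exp_add, (by ring : s ^ 2 / 2 + -s ^ 2 / 2 = 0), Real.exp_zero]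
    have hF' : -Real.exp (-s ^ 2 / 2) ≤ s * Fgauss s := by
      have h2 := mul_le_mul_of_nonpos_left hF hs.le
      have h3 : s * (-Real.exp (-s ^ 2 / 2) / s) = -Real.exp (-s ^ 2 / 2) := by
        field_simp
      linarith [h2, h3.ge.trans h2]
    rw [hker]
    nlinarith [Real.exp_pos (s ^ 2 / 2)]

lemma hasDerivAt_hker (s : ℝ) : HasDerivAt hker (s * hker s + 1) s := by
  have h1 : HasDerivAt (fun u : ℝ => Real.exp (u ^ 2 / 2)) (s * Real.exp (s ^ 2 / 2)) s := by
    have hp : HasDerivAt (fun u : ℝ => u ^ 2 / 2) s s := by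
      have := (hasDerivAt_pow 2 s).div_const 2
      exact this.congr_deriv (by ring)
    exact hp.exp.congr_deriv (by ring)
  have hexp : Real.exp (s ^ 2 / 2) * Real.exp (-s ^ 2 / 2) = 1 := by
    rw [← Real.exp_add, (by ring : s ^ 2 / 2 + -s ^ 2 / 2 = 0), Real.exp_zero]
  exact (h1.mul (hasDerivAt_Fgauss s)).congr_deriv (by rw [hker, hexp]; ring)

lemma hker_monotone : Monotone hker :=
  monotone_of_hasDerivAt_nonneg (f' := fun s => s * hker s + 1) hasDerivAt_hker mills

lemma hker_continuous : Continuous hker := by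
  have : Differentiable ℝ hker := fun s => (hasDerivAt_hker s).differentiableAt
  exact this.continuous

lemma Fgauss_shift (w c : ℝ) :
    ∫ v in Set.Iic w, Real.exp (-(v - c) ^ 2 / 2) = Fgauss (w - c) := by
  rw [Fgauss, ← integral_indicator measurableSet_Iic, ← integral_indicator measurableSet_Iic]
  have heq : (Set.Iic w).indicator (fun v => Real.exp (-(v - c) ^ 2 / 2))
      = fun v => (Set.Iic (w - c)).indicator (fun u => Real.exp (-u ^ 2 / 2)) (v - c) := by
    funext v
    simp only [Set.indicator_apply, Set.mem_Iic, sub_le_sub_iff_right]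
  rw [heq, integral_sub_right_eq_self]

lemma fubini_key (V_R V_F c : ℝ) (hV : V_R < V_F) :
    (∫ v in Set.Iic V_F, Real.exp (-(v - c) ^ 2 / 2) *
        ∫ w in (max v V_R)..V_F, Real.exp ((w - c) ^ 2 / 2))
      = ∫ w in V_R..V_F, hker (w - c) := by
  set S : ℝ → ℝ → ℝ := fun v w => Set.indicator (Set.Ioc (max v V_R) V_F)
    (fun w => Real.exp (-(v - c) ^ 2 / 2) * Real.exp ((w - c) ^ 2 / 2)) w with hS
  set T : Set (ℝ × ℝ) := {p : ℝ × ℝ | max p.1 V_R < p.2 ∧ p.2 ≤ V_F} with hT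
  have hTmeas : MeasurableSet T := by
    apply MeasurableSet.inter
    · exact measurableSet_lt (measurable_fst.max measurable_const) measurable_snd
    · exact measurableSet_le measurable_snd measurable_const
  have huncurry : Function.uncurry S = T.indicator
      (fun p : ℝ × ℝ => Real.exp (-(p.1 - c) ^ 2 / 2) * Real.exp ((p.2 - c) ^ 2 / 2)) := by
    funext p
    rw [Function.uncurry, hS]
    simp only [Set.indicator_apply, Set.mem_Ioc, hT, Set.mem_setOf_eq]
  have hG : Integrable (fun p : ℝ × ℝ => Real.exp (-(p.1 - c) ^ 2 / 2) *
      (Set.Ioc V_R V_F).indicator (fun w => Real.exp ((w - c) ^ 2 / 2)) p.2)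
      (volume.prod volume) := by
    exact Integrable.mul_prod (integrable_gauss.comp_sub_right c)
      ((integrable_indicator_iff measurableSet_Ioc).mpr
        ((Real.continuous_exp.comp (by continuity)).integrableOn_Ioc))
  have hSmeas : AEStronglyMeasurable (Function.uncurry S) (volume.prod volume) := by
    rw [huncurry]
    exact ((Real.continuous_exp.comp (by continuity)).mul
      (Real.continuous_exp.comp (by continuity))).aestronglyMeasurable.indicator hTmeas
  have hSint : Integrable (Function.uncurry S) (volume.prod volume) := by
    apply Integrable.mono' hG hSmeas
    filter_upwards with p
    rw [huncurry]
    by_cases hp : p ∈ T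
    · have hp' : max p.1 V_R < p.2 ∧ p.2 ≤ V_F := hp
      have hp2 : p.2 ∈ Set.Ioc V_R V_F := ⟨lt_of_le_of_lt (le_max_right _ _) hp'.1, hp'.2⟩
      rw [Set.indicator_of_mem hp, Set.indicator_of_mem hp2, Real.norm_eq_abs,
        abs_of_nonneg (by positivity)]
    · rw [Set.indicator_of_notMem hp, norm_zero]
      exact mul_nonneg (Real.exp_pos _).le
        (Set.indicator_nonneg (fun x _ => (Real.exp_pos _).le) _)
  have stepA : (∫ v in Set.Iic V_F, Real.exp (-(v - c) ^ 2 / 2) *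
        ∫ w in (max v V_R)..V_F, Real.exp ((w - c) ^ 2 / 2))
      = ∫ v in Set.Iic V_F, ∫ w, S v w := by
    apply setIntegral_congr_fun measurableSet_Iic
    intro v hv
    have hv' : v ≤ V_F := hv
    have hmax : max v V_R ≤ V_F := max_le hv' hV.le
    dsimp only
    rw [intervalIntegral.integral_of_le hmax, ← integral_const_mul,
      ← integral_indicator measurableSet_Ioc]
  have stepB : (∫ v in Set.Iic V_F, ∫ w, S v w) = ∫ v, ∫ w, S v w := by
    apply setIntegral_eq_integral_of_forall_compl_eq_zero
    intro v hv
    have hv' : V_F < v := by simpa using hv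
    have hz : ∀ w, S v w = 0 := by
      intro w
      rw [hS]
      simp only [Set.indicator_apply, Set.mem_Ioc]
      rw [if_neg]
      rintro ⟨h1, h2⟩
      exact absurd (lt_of_le_of_lt (le_trans (le_max_left v V_R) h1.le) (lt_of_le_of_lt h2 hv'))
        (lt_irrefl v)
    simp [hz]
  have stepC : (∫ v, ∫ w, S v w) = ∫ w, ∫ v, S v w := integral_integral_swap hSint
  have stepD : ∀ w, (∫ v, S v w) = (Set.Ioc V_R V_F).indicator (fun w => hker (w - c)) w := by
    intro w
    by_cases hw : w ∈ Set.Ioc V_R V_F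
    · have hw' : V_R < w ∧ w ≤ V_F := hw
      have hfun : (fun v => S v w) = Set.indicator (Set.Iio w)
          (fun v => Real.exp (-(v - c) ^ 2 / 2) * Real.exp ((w - c) ^ 2 / 2)) := by
        funext v
        rw [hS]
        simp only [Set.indicator_apply, Set.mem_Ioc, Set.mem_Iio]
        by_cases hv : v < w
        · rw [if_pos ⟨max_lt hv hw'.1, hw'.2⟩, if_pos hv]
        · rw [if_neg, if_neg hv]
          rintro ⟨h1, _⟩
          exact hv (lt_of_le_of_lt (le_max_left v V_R) h1)
      rw [hfun, integral_indicator measurableSet_Iio, ← integral_Iic_eq_integral_Iio,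
        integral_mul_const, Fgauss_shift, Set.indicator_of_mem hw, hker]
      ring
    · have hz : ∀ v, S v w = 0 := by
        intro v
        rw [hS]
        simp only [Set.indicator_apply, Set.mem_Ioc]
        rw [if_neg]
        rintro ⟨h1, h2⟩
        exact hw ⟨lt_of_le_of_lt (le_max_right v V_R) h1, h2⟩
      rw [Set.indicator_of_notMem hw]
      simp [hz]
  rw [stepA, stepB, stepC]
  simp_rw [stepD]
  rw [integral_indicator measurableSet_Ioc, intervalIntegral.integral_of_le hV.le]

lemma Ifun_eq (b V_R V_F N : ℝ) (hV : V_R < V_F) :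
    Ifun b V_R V_F N = ∫ w in V_R..V_F, hker (w - b * N) := by
  rw [Ifun]
  exact fubini_key V_R V_F (b * N) hV

lemma Ifun_pos (b V_R V_F N : ℝ) (hV : V_R < V_F) : 0 < Ifun b V_R V_F N := by
  rw [Ifun_eq b V_R V_F N hV]
  exact intervalIntegral.intervalIntegral_pos_of_pos
    ((hker_continuous.comp (by continuity)).intervalIntegrable _ _)
    (fun x => hker_pos _) hV

lemma Ifun_anti (b V_R V_F : ℝ) (hV : V_R < V_F) (hb : 0 < b) {N1 N2 : ℝ} (h : N1 ≤ N2) :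
    Ifun b V_R V_F N2 ≤ Ifun b V_R V_F N1 := by
  rw [Ifun_eq b V_R V_F N1 hV, Ifun_eq b V_R V_F N2 hV]
  apply intervalIntegral.integral_mono_on hV.le
    ((hker_continuous.comp (by continuity)).intervalIntegrable _ _)
    ((hker_continuous.comp (by continuity)).intervalIntegrable _ _)
  intro w _
  show hker (w - b * N2) ≤ hker (w - b * N1)
  exact hker_monotone (by nlinarith)

lemma Ifun_continuous (b V_R V_F : ℝ) (hV : V_R < V_F) :
    Continuous (fun N => Ifun b V_R V_F N) := by
  have heq : (fun N => Ifun b V_R V_F N)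
      = fun N => (∫ s in (0:ℝ)..(V_F - b * N), hker s)
          - ∫ s in (0:ℝ)..(V_R - b * N), hker s := by
    funext N
    rw [Ifun_eq b V_R V_F N hV, intervalIntegral.integral_comp_sub_right (fun s => hker s) (b*N),
      intervalIntegral.integral_interval_sub_left
        (hker_continuous.intervalIntegrable _ _) (hker_continuous.intervalIntegrable _ _)]
  rw [heq]
  have hprim : Continuous (fun x : ℝ => ∫ s in (0:ℝ)..x, hker s) :=
    intervalIntegral.continuous_primitive (fun a b => hker_continuous.intervalIntegrable a b) 0
  exact (hprim.comp (by continuity)).sub (hprim.comp (by continuity))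

/-- Case 1(a) of Theorem 2.3: `b > 0`, one equilibrium `N*` at which `1/I` crosses the
diagonal.  Firing rate sequences starting above `N*` decrease to `N*`, and those starting
below `N*` increase to `N*`. -/
theorem firingRateSeq_crossing_case (b V_R V_F : ℝ) (hV : V_R < V_F) (hb : 0 < b)
    (Nstar : ℝ) (hNstar : 0 < Nstar)
    (hfix : Nstar * Ifun b V_R V_F Nstar = 1)
    (hbelow : ∀ N : ℝ, 0 ≤ N → N < Nstar → N < 1 / Ifun b V_R V_F N)
    (habove : ∀ N : ℝ, Nstar < N → 1 / Ifun b V_R V_F N < N)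
    (Nseq : ℕ → ℝ) (h0 : 0 ≤ Nseq 0)
    (hrec : ∀ k : ℕ, Nseq (k + 1) = 1 / Ifun b V_R V_F (Nseq k)) :
    (Nstar ≤ Nseq 0 →
      Antitone Nseq ∧ Tendsto Nseq atTop (nhds Nstar)) ∧
    (Nseq 0 ≤ Nstar →
      Monotone Nseq ∧ Tendsto Nseq atTop (nhds Nstar)) := by
  have Ipos : ∀ N, 0 < Ifun b V_R V_F N := fun N => Ifun_pos b V_R V_F N hV
  set f : ℝ → ℝ := fun x => 1 / Ifun b V_R V_F x with hf
  have fpos : ∀ x, 0 < f x := fun x => by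
    rw [hf]; exact one_div_pos.mpr (Ipos x)
  have fmono : Monotone f := by
    intro x y hxy
    exact one_div_le_one_div_of_le (Ipos y) (Ifun_anti b V_R V_F hV hb hxy)
  have ffix : f Nstar = Nstar := by
    have hI : Ifun b V_R V_F Nstar = 1 / Nstar := by
      rw [eq_div_iff hNstar.ne']
      linarith [hfix]
    show 1 / Ifun b V_R V_F Nstar = Nstar
    rw [hI, one_div_one_div]
  have fcont : Continuous f := by
    rw [hf]
    exact continuous_const.div (Ifun_continuous b V_R V_F hV) (fun x => (Ipos x).ne')
  have hreceq : ∀ k, Nseq (k + 1) = f (Nseq k) := hrec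
  constructor
  · -- decreasing case
    intro hstart
    have hge : ∀ k, Nstar ≤ Nseq k := by
      intro k
      induction k with
      | zero => exact hstart
      | succ n ih =>
        rw [hreceq n, ← ffix]
        exact fmono ih
    have hanti : Antitone Nseq := by
      apply antitone_nat_of_succ_le
      intro n
      rcases eq_or_lt_of_le (hge n) with h | h
      · rw [hreceq n, ← h, ffix]
      · rw [hreceq n]
        exact (habove _ h).le
    refine ⟨hanti, ?_⟩
    have hbdd : BddBelow (Set.range Nseq) := ⟨Nstar, by rintro x ⟨k, rfl⟩; exact hge k⟩
    have htend : Tendsto Nseq atTop (nhds (⨅ k, Nseq k)) := tendsto_atTop_ciInf hanti hbdd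
    have hL : Nstar ≤ ⨅ k, Nseq k := le_ciInf hge
    have hfixL : f (⨅ k, Nseq k) = ⨅ k, Nseq k := by
      have h1 : Tendsto (fun k => Nseq (k + 1)) atTop (nhds (⨅ k, Nseq k)) :=
        htend.comp (tendsto_add_atTop_nat 1)
      have h2 : Tendsto (fun k => f (Nseq k)) atTop (nhds (f (⨅ k, Nseq k))) :=
        (fcont.tendsto _).comp htend
      have heq : (fun k => Nseq (k + 1)) = fun k => f (Nseq k) := funext hreceq
      rw [heq] at h1
      exact tendsto_nhds_unique h2 h1
    have : (⨅ k, Nseq k) = Nstar := by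
      rcases eq_or_lt_of_le hL with h | h
      · exact h.symm
      · exact absurd hfixL (ne_of_lt (habove _ h))
    rwa [this] at htend
  · -- increasing case
    intro hstart
    have hnonneg : ∀ k, 0 ≤ Nseq k := by
      intro k
      cases k with
      | zero => exact h0
      | succ n => rw [hreceq n]; exact (fpos _).le
    have hle : ∀ k, Nseq k ≤ Nstar := by
      intro k
      induction k with
      | zero => exact hstart
      | succ n ih =>
        rw [hreceq n, ← ffix]
        exact fmono ih
    have hmono : Monotone Nseq := by
      apply monotone_nat_of_le_succ
      intro n
      rcases eq_or_lt_of_le (hle n) with h | h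
      · rw [hreceq n, h, ffix, ← h]
      · rw [hreceq n]
        exact (hbelow _ (hnonneg n) h).le
    refine ⟨hmono, ?_⟩
    have hbdd : BddAbove (Set.range Nseq) := ⟨Nstar, by rintro x ⟨k, rfl⟩; exact hle k⟩
    have htend : Tendsto Nseq atTop (nhds (⨆ k, Nseq k)) := tendsto_atTop_ciSup hmono hbdd
    have hL : (⨆ k, Nseq k) ≤ Nstar := ciSup_le hle
    have hL0 : 0 ≤ ⨆ k, Nseq k := le_trans h0 (le_ciSup hbdd 0)
    have hfixL : f (⨆ k, Nseq k) = ⨆ k, Nseq k := by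
      have h1 : Tendsto (fun k => Nseq (k + 1)) atTop (nhds (⨆ k, Nseq k)) :=
        htend.comp (tendsto_add_atTop_nat 1)
      have h2 : Tendsto (fun k => f (Nseq k)) atTop (nhds (f (⨆ k, Nseq k))) :=
        (fcont.tendsto _).comp htend
      have heq : (fun k => Nseq (k + 1)) = fun k => f (Nseq k) := funext hreceq
      rw [heq] at h1
      exact tendsto_nhds_unique h2 h1
    have : (⨆ k, Nseq k) = Nstar := by
      rcases eq_or_lt_of_le hL with h | h
      · exact h
      · exact absurd hfixL (ne_of_gt (hbelow _ hL0 h))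
    rwa [this] at htend
end
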